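/- Let Φ be a continuously differentiable strictly convex Δ₂(0)-regular N-function and G a finitely generated group (generating set S) acting on a countable set X. For f₁, f₂ ∈ D^Φ(X): f₁ − f₂ is constant on every G-orbit if and only if ⟨Δ_Φ f₁, f₁ − f₂⟩ = ⟨Δ_Φ f₂, f₁ − f₂⟩. -/

import Mathlib

open MeasureTheory Filter Topology

/-- `Φ` is an N-function with right derivative `φ`. -/
structure IsNFunction (Φ φ : ℝ → ℝ) : Prop where
  repr : ∀ x : ℝ, Φ x = ∫ t in (0:ℝ)..|x|, φ t
  mono : MonotoneOn φ (Set.Ici (0:ℝ))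
  rightCont : ∀ t : ℝ, 0 ≤ t → ContinuousWithinAt φ (Set.Ici t) t
  zero : φ 0 = 0
  pos : ∀ t : ℝ, 0 < t → 0 < φ t
  tendsto_top : Tendsto φ atTop atTop

variable {G X : Type*}

/-- Membership in the Orlicz space `ℓ^Φ(X)`. -/
def MemOrlicz (Φ : ℝ → ℝ) (f : X → ℝ) : Prop :=
  ∃ a > (0:ℝ), Summable fun x => Φ (a * f x)

/-- The permutation representation: `(λ_X(g) f)(x) = f(g⁻¹ • x)`. -/
def lamX [Group G] [MulAction G X] (g : G) (f : X → ℝ) : X → ℝ :=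
  fun x => f (g⁻¹ • x)

/-- The space of Φ-Dirichlet finite functions `D^Φ(X)`. -/
def MemDPhi [Group G] [MulAction G X] (Φ : ℝ → ℝ) (f : X → ℝ) : Prop :=
  ∀ g : G, MemOrlicz Φ (lamX g f - f)

/-- Functions constant on the `G`-orbits of `X`. -/
def ConstOnOrbits [Group G] [MulAction G X] (f : X → ℝ) : Prop :=
  ∀ (g : G) (x : X), f (g • x) = f x

/-- Under a Δ₂ condition at zero, membership in the Orlicz space gives summability of
`Φ (c * h x)` for every `c`. -/
lemma summable_const_mul_of_memOrlicz {X : Type*} {Φ : ℝ → ℝ}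
    (hΦabs : ∀ t, Φ |t| = Φ t)
    (hΦmono : MonotoneOn Φ (Set.Ici (0:ℝ))) (hΦpos : ∀ t : ℝ, 0 < t → 0 < Φ t)
    (hΦnonneg : ∀ t : ℝ, 0 ≤ Φ t)
    (hΔ₂ : ∃ x₀ > (0:ℝ), ∃ K > (2:ℝ), ∀ x : ℝ, 0 ≤ x → x ≤ x₀ → Φ (2 * x) ≤ K * Φ x)
    {h : X → ℝ} (hh : MemOrlicz Φ h) (c : ℝ) :
    Summable fun x => Φ (c * h x) := by
  obtain ⟨α, hα, hs⟩ := hh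
  obtain ⟨x₀, hx₀, K, hK, hd⟩ := hΔ₂
  -- doubling step
  have step : ∀ β : ℝ, 0 < β → (Summable fun x => Φ (β * h x)) →
      Summable fun x => Φ (2 * β * h x) := by
    intro β hβ hsb
    have h0 : Tendsto (fun x => Φ (β * h x)) cofinite (𝓝 0) := hsb.tendsto_cofinite_zero
    have hev : ∀ᶠ x in cofinite, Φ (β * h x) < Φ x₀ :=
      h0.eventually_lt_const (hΦpos x₀ hx₀)
    refine Summable.of_norm_bounded_eventually (hsb.mul_left K) ?_
    filter_upwards [hev] with x hx
    have habs : |β * h x| ≤ x₀ := by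
      by_contra hcon
      push_neg at hcon
      have : Φ x₀ ≤ Φ |β * h x| :=
        hΦmono (Set.mem_Ici.2 hx₀.le) (Set.mem_Ici.2 (abs_nonneg _)) hcon.le
      rw [hΦabs] at this
      linarith
    have : Φ (2 * β * h x) ≤ K * Φ (β * h x) := by
      calc Φ (2 * β * h x) = Φ |2 * β * h x| := (hΦabs _).symm
        _ = Φ (2 * |β * h x|) := by rw [mul_assoc, abs_mul, abs_two]
        _ ≤ K * Φ |β * h x| := hd _ (abs_nonneg _) habs
        _ = K * Φ (β * h x) := by rw [hΦabs]
    rw [Real.norm_eq_abs, abs_of_nonneg (hΦnonneg _)]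
    exact this
  have hpow : ∀ n : ℕ, Summable fun x => Φ (2 ^ n * α * h x) := by
    intro n
    induction n with
    | zero => simpa using hs
    | succ n ih =>
      have := step (2 ^ n * α) (by positivity) ih
      convert this using 2 with x
      ring_nf
  obtain ⟨n, hn⟩ := pow_unbounded_of_one_lt (|c| / α) (one_lt_two (α := ℝ))
  have hcn : |c| ≤ 2 ^ n * α := by
    rw [div_lt_iff₀ hα] at hn
    linarith
  refine Summable.of_nonneg_of_le (fun x => hΦnonneg _) (fun x => ?_) (hpow n)
  calc Φ (c * h x) = Φ |c * h x| := (hΦabs _).symm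
    _ ≤ Φ (2 ^ n * α * |h x|) := by
        refine hΦmono (Set.mem_Ici.2 (abs_nonneg _)) (Set.mem_Ici.2 (by positivity)) ?_
        rw [abs_mul]
        exact mul_le_mul_of_nonneg_right hcn (abs_nonneg _)
    _ = Φ |2 ^ n * α * h x| := by rw [abs_mul (2 ^ n * α), abs_of_pos (by positivity : (0:ℝ) < 2 ^ n * α)]
    _ = Φ (2 ^ n * α * h x) := hΦabs _

theorem const_on_orbits_iff_pairing_eq [Group G] [MulAction G X] [Countable X]
    (S : Finset G) (hgen : Subgroup.closure (S : Set G) = ⊤)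
    (Φ φ₀ : ℝ → ℝ) (hΦ : IsNFunction Φ φ₀) (hC1 : ContDiff ℝ 1 Φ)
    (hconv : StrictConvexOn ℝ Set.univ Φ)
    (hΔ₂ : ∃ x₀ > (0:ℝ), ∃ K > (2:ℝ), ∀ x : ℝ, 0 ≤ x → x ≤ x₀ → Φ (2 * x) ≤ K * Φ x)
    (f₁ f₂ : X → ℝ) (hf₁ : MemDPhi (G := G) Φ f₁) (hf₂ : MemDPhi (G := G) Φ f₂) :
    ConstOnOrbits (G := G) (f₁ - f₂) ↔
      (∑' x : X, ∑ s ∈ S, deriv Φ (f₁ (s⁻¹ • x) - f₁ x) *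
          ((f₁ - f₂) (s⁻¹ • x) - (f₁ - f₂) x)) =
      (∑' x : X, ∑ s ∈ S, deriv Φ (f₂ (s⁻¹ • x) - f₂ x) *
          ((f₁ - f₂) (s⁻¹ • x) - (f₁ - f₂) x)) := by
  classical
  have hdiff : ∀ x : ℝ, DifferentiableAt ℝ Φ x := fun x =>
    (hC1.differentiable one_ne_zero).differentiableAt
  have hΦeven : ∀ x : ℝ, Φ (-x) = Φ x := fun x => by rw [hΦ.repr, hΦ.repr, abs_neg]
  have hΦ0 : Φ 0 = 0 := by rw [hΦ.repr]; simp
  have hdodd : ∀ x : ℝ, deriv Φ (-x) = -deriv Φ x := by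
    intro x
    have hfe : Φ = fun y => Φ (-y) := funext fun y => (hΦeven y).symm
    have : deriv Φ x = deriv (fun y => Φ (-y)) x := by rw [← hfe]
    rw [deriv_comp_neg] at this
    linarith
  have hd0 : deriv Φ 0 = 0 := by have := hdodd 0; rw [neg_zero] at this; linarith
  have hsm : StrictMono (deriv Φ) := fun a b hab =>
    hconv.strictMonoOn_deriv (fun x _ => hdiff x) (Set.mem_univ a) (Set.mem_univ b) hab
  have hΦsm : StrictMonoOn Φ (Set.Ici (0:ℝ)) := by
    refine strictMonoOn_of_deriv_pos (convex_Ici 0) hC1.continuous.continuousOn ?_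
    intro x hx
    rw [interior_Ici] at hx
    rw [← hd0]
    exact hsm hx
  have hΦmono : MonotoneOn Φ (Set.Ici (0:ℝ)) := hΦsm.monotoneOn
  have hΦabs : ∀ t : ℝ, Φ |t| = Φ t := by
    intro t
    rcases abs_choice t with h | h
    · rw [h]
    · rw [h]; exact hΦeven t
  have hΦnonneg : ∀ t : ℝ, 0 ≤ Φ t := by
    intro t
    rw [← hΦabs t, ← hΦ0]
    exact hΦmono (Set.mem_Ici.2 le_rfl) (Set.mem_Ici.2 (abs_nonneg t)) (abs_nonneg t)
  have hΦpos : ∀ t : ℝ, 0 < t → 0 < Φ t := fun t ht => by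
    rw [← hΦ0]
    exact hΦsm (Set.mem_Ici.2 le_rfl) (Set.mem_Ici.2 ht.le) ht
  have hdnn : ∀ t : ℝ, 0 ≤ t → 0 ≤ deriv Φ t := fun t ht => by
    rw [← hd0]; exact hsm.monotone ht
  -- key bound: t * Φ'(t) ≤ Φ(2t) for t ≥ 0
  have B1 : ∀ t : ℝ, 0 ≤ t → deriv Φ t * t ≤ Φ (2 * t) := by
    intro t ht
    rcases eq_or_lt_of_le ht with h | h
    · rw [← h]; simp [hΦ0.symm ▸ hΦnonneg 0, hΦ0]
    · have hs := hconv.deriv_lt_slope (Set.mem_univ t) (Set.mem_univ (2 * t))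
        (by linarith) (hdiff t)
      have h2 : slope Φ t (2 * t) = (Φ (2 * t) - Φ t) / t := by
        rw [slope_def_field, div_eq_div_iff (by linarith) (by linarith)]; ring
      rw [h2, lt_div_iff₀ h] at hs
      have := hΦnonneg t
      linarith
  have hdabs : ∀ t : ℝ, |deriv Φ t| = deriv Φ |t| := by
    intro t
    rcases le_or_gt 0 t with h | h
    · rw [abs_of_nonneg h, abs_of_nonneg (hdnn t h)]
    · have h1 : deriv Φ t = -deriv Φ (-t) := by
        have := hdodd (-t); rw [neg_neg] at this; linarith
      rw [abs_of_neg h, h1, abs_neg, abs_of_nonneg (hdnn (-t) (by linarith))]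
  have h2abs : ∀ a : ℝ, Φ (2 * |a|) = Φ (2 * a) := by
    intro a
    rw [← hΦabs (2 * a), abs_mul, abs_two]
  -- key bound: |Φ'(a) * c| ≤ Φ(2a) + Φ(2c)
  have B3 : ∀ a c : ℝ, |deriv Φ a * c| ≤ Φ (2 * a) + Φ (2 * c) := by
    intro a c
    rw [abs_mul, hdabs]
    rcases le_total |c| |a| with h | h
    · calc deriv Φ |a| * |c| ≤ deriv Φ |a| * |a| :=
            mul_le_mul_of_nonneg_left h (hdnn _ (abs_nonneg a))
        _ ≤ Φ (2 * |a|) := B1 _ (abs_nonneg a)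
        _ = Φ (2 * a) := h2abs a
        _ ≤ Φ (2 * a) + Φ (2 * c) := le_add_of_nonneg_right (hΦnonneg _)
    · calc deriv Φ |a| * |c| ≤ deriv Φ |c| * |c| :=
            mul_le_mul_of_nonneg_right (hsm.monotone h) (abs_nonneg c)
        _ ≤ Φ (2 * |c|) := B1 _ (abs_nonneg c)
        _ = Φ (2 * c) := h2abs c
        _ ≤ Φ (2 * a) + Φ (2 * c) := le_add_of_nonneg_left (hΦnonneg _)
  -- summability of the doubled Orlicz functions
  have key2 : ∀ h : X → ℝ, MemOrlicz Φ h → Summable fun x => Φ (2 * h x) := fun h hh =>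
    summable_const_mul_of_memOrlicz hΦabs hΦmono hΦpos hΦnonneg hΔ₂ hh 2
  have hA1 : ∀ s : G, Summable fun x : X => Φ (2 * (f₁ (s⁻¹ • x) - f₁ x)) := by
    intro s
    have := key2 (lamX s f₁ - f₁) (hf₁ s)
    simpa [lamX, Pi.sub_apply] using this
  have hB1 : ∀ s : G, Summable fun x : X => Φ (2 * (f₂ (s⁻¹ • x) - f₂ x)) := by
    intro s
    have := key2 (lamX s f₂ - f₂) (hf₂ s)
    simpa [lamX, Pi.sub_apply] using this
  -- the second factor equals the difference of increments
  have hfac : ∀ (s : G) (x : X), (f₁ - f₂) (s⁻¹ • x) - (f₁ - f₂) x =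
      (f₁ (s⁻¹ • x) - f₁ x) - (f₂ (s⁻¹ • x) - f₂ x) := by
    intro s x; simp [Pi.sub_apply]; ring
  -- summability of both pairing sums
  have hterm : ∀ (g : X → ℝ) (_ : ∀ s : G, Summable fun x : X => Φ (2 * (g (s⁻¹ • x) - g x)))
      (s : G), Summable fun x : X =>
        deriv Φ (g (s⁻¹ • x) - g x) * ((f₁ - f₂) (s⁻¹ • x) - (f₁ - f₂) x) := by
    intro g hg s
    refine Summable.of_norm_bounded
      (((hg s).add (hA1 s)).add ((hg s).add (hB1 s))) ?_
    intro x
    rw [Real.norm_eq_abs, hfac s x, mul_sub]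
    calc |deriv Φ (g (s⁻¹ • x) - g x) * (f₁ (s⁻¹ • x) - f₁ x)
          - deriv Φ (g (s⁻¹ • x) - g x) * (f₂ (s⁻¹ • x) - f₂ x)|
        ≤ |deriv Φ (g (s⁻¹ • x) - g x) * (f₁ (s⁻¹ • x) - f₁ x)|
          + |deriv Φ (g (s⁻¹ • x) - g x) * (f₂ (s⁻¹ • x) - f₂ x)| := abs_sub _ _
      _ ≤ _ := add_le_add (B3 _ _) (B3 _ _)
  have hAs : Summable fun x : X => ∑ s ∈ S, deriv Φ (f₁ (s⁻¹ • x) - f₁ x) *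
      ((f₁ - f₂) (s⁻¹ • x) - (f₁ - f₂) x) :=
    summable_sum fun s _ => hterm f₁ hA1 s
  have hBs : Summable fun x : X => ∑ s ∈ S, deriv Φ (f₂ (s⁻¹ • x) - f₂ x) *
      ((f₁ - f₂) (s⁻¹ • x) - (f₁ - f₂) x) :=
    summable_sum fun s _ => hterm f₂ hB1 s
  constructor
  · -- easy direction
    intro hc
    refine tsum_congr fun x => Finset.sum_congr rfl fun s _ => ?_
    have hz : (f₁ - f₂) (s⁻¹ • x) - (f₁ - f₂) x = 0 := by
      rw [hc s⁻¹ x, sub_self]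
    rw [hz, mul_zero, mul_zero]
  · intro heq
    set D : X → ℝ := fun x => ∑ s ∈ S,
      (deriv Φ (f₁ (s⁻¹ • x) - f₁ x) - deriv Φ (f₂ (s⁻¹ • x) - f₂ x)) *
        ((f₁ - f₂) (s⁻¹ • x) - (f₁ - f₂) x) with hD
    have hDeq : ∀ x, D x =
        (∑ s ∈ S, deriv Φ (f₁ (s⁻¹ • x) - f₁ x) * ((f₁ - f₂) (s⁻¹ • x) - (f₁ - f₂) x))
        - (∑ s ∈ S, deriv Φ (f₂ (s⁻¹ • x) - f₂ x) * ((f₁ - f₂) (s⁻¹ • x) - (f₁ - f₂) x)) := by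
      intro x
      rw [hD, ← Finset.sum_sub_distrib]
      exact Finset.sum_congr rfl fun s _ => by ring
    have hDsum : Summable D := by
      have : D = fun x =>
          (∑ s ∈ S, deriv Φ (f₁ (s⁻¹ • x) - f₁ x) * ((f₁ - f₂) (s⁻¹ • x) - (f₁ - f₂) x))
          - (∑ s ∈ S, deriv Φ (f₂ (s⁻¹ • x) - f₂ x) * ((f₁ - f₂) (s⁻¹ • x) - (f₁ - f₂) x)) :=
        funext hDeq
      rw [this]
      exact hAs.sub hBs
    have htD : ∑' x, D x = 0 := by
      calc ∑' x, D x = ∑' x,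
            ((∑ s ∈ S, deriv Φ (f₁ (s⁻¹ • x) - f₁ x) * ((f₁ - f₂) (s⁻¹ • x) - (f₁ - f₂) x))
            - (∑ s ∈ S, deriv Φ (f₂ (s⁻¹ • x) - f₂ x) * ((f₁ - f₂) (s⁻¹ • x) - (f₁ - f₂) x))) :=
          tsum_congr hDeq
        _ = _ - _ := Summable.tsum_sub hAs hBs
        _ = 0 := by rw [heq, sub_self]
    -- each summand of D is nonnegative
    have htnn : ∀ (x : X) (s : G), 0 ≤
        (deriv Φ (f₁ (s⁻¹ • x) - f₁ x) - deriv Φ (f₂ (s⁻¹ • x) - f₂ x)) *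
          ((f₁ - f₂) (s⁻¹ • x) - (f₁ - f₂) x) := by
      intro x s
      rw [hfac s x]
      rcases lt_trichotomy (f₁ (s⁻¹ • x) - f₁ x) (f₂ (s⁻¹ • x) - f₂ x) with h | h | h
      · exact le_of_lt (mul_pos_of_neg_of_neg (sub_neg.2 (hsm h)) (sub_neg.2 h))
      · rw [h]; simp
      · exact le_of_lt (mul_pos (sub_pos.2 (hsm h)) (sub_pos.2 h))
    have hDnn : ∀ x, 0 ≤ D x := fun x =>
      Finset.sum_nonneg fun s _ => htnn x s
    have hDzero : ∀ x, D x = 0 := fun x =>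
      le_antisymm (htD ▸ Summable.le_tsum hDsum x fun j _ => hDnn j) (hDnn x)
    -- hence each increment agrees
    have hab : ∀ s ∈ S, ∀ x : X, (f₁ - f₂) (s⁻¹ • x) = (f₁ - f₂) x := by
      intro s hs x
      have hterm0 := (Finset.sum_eq_zero_iff_of_nonneg fun s _ => htnn x s).1 (hDzero x) s hs
      by_contra hne
      have h1 : (f₁ - f₂) (s⁻¹ • x) - (f₁ - f₂) x ≠ 0 := sub_ne_zero.2 hne
      rw [hfac s x] at h1 hterm0
      rcases lt_trichotomy (f₁ (s⁻¹ • x) - f₁ x) (f₂ (s⁻¹ • x) - f₂ x) with h | h | h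
      · exact absurd hterm0 (ne_of_gt (mul_pos_of_neg_of_neg (sub_neg.2 (hsm h)) (sub_neg.2 h)))
      · exact h1 (by rw [h, sub_self])
      · exact absurd hterm0 (ne_of_gt (mul_pos (sub_pos.2 (hsm h)) (sub_pos.2 h)))
    have hS : ∀ s ∈ S, ∀ x : X, (f₁ - f₂) (s • x) = (f₁ - f₂) x := by
      intro s hs x
      have := hab s hs (s • x)
      rw [inv_smul_smul] at this
      exact this.symm
    let H : Subgroup G :=
      { carrier := {g : G | ∀ x : X, (f₁ - f₂) (g • x) = (f₁ - f₂) x}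
        one_mem' := fun x => by rw [one_smul]
        mul_mem' := fun {p q} hp hq x => by rw [mul_smul, hp (q • x), hq x]
        inv_mem' := fun {p} hp x => by
          have := hp (p⁻¹ • x)
          rw [smul_inv_smul] at this
          exact this.symm }
    have htop : (⊤ : Subgroup G) ≤ H := by
      rw [← hgen]
      exact (Subgroup.closure_le H).2 fun s hs => hS s hs
    exact fun g x => htop (Subgroup.mem_top g) x
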